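/- In a fuzzy cycle, the weight of any β-strong edge is less than or equal to the weight of any α-strong edge; in particular it does not exceed the minimum weight among α-strong edges. -/

import Mathlib

open Finset

/-- A fuzzy graph on vertex type `V`. -/
structure FuzzyGraph (V : Type*) where
  ρ : V → ℝ
  υ : V → V → ℝ
  ρ_nonneg : ∀ a, 0 ≤ ρ a
  ρ_le_one : ∀ a, ρ a ≤ 1
  υ_nonneg : ∀ a b, 0 ≤ υ a b
  symm : ∀ a b, υ a b = υ b a
  υ_le : ∀ a b, υ a b ≤ min (ρ a) (ρ b)
  loopless : ∀ a, υ a a = 0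

namespace FuzzyGraph

variable {V : Type*} [Fintype V] [DecidableEq V]

/-- Strength of a path given by its list of successive vertices:
the minimum of the weights of its edges. -/
def pathStrength (X : FuzzyGraph V) : List V → ℝ
  | [] => 0
  | [_] => 0
  | [a, b] => X.υ a b
  | a :: b :: c :: l => min (X.υ a b) (X.pathStrength (b :: c :: l))

/-- `l` is a path from `a` to `b` : distinct vertices joined by positive-weight edges. -/
def IsPath (X : FuzzyGraph V) (a b : V) (l : List V) : Prop :=
  l.Nodup ∧ l.head? = some a ∧ l.getLast? = some b ∧ 2 ≤ l.length ∧
    l.Chain' (fun x y => 0 < X.υ x y)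

/-- Strength of connectedness between two vertices: maximum strength of a path. -/
noncomputable def conn (X : FuzzyGraph V) (a b : V) : ℝ :=
  sSup {s | ∃ l : List V, X.IsPath a b l ∧ s = X.pathStrength l}

/-- Delete the edge `ab` (set its weight to `0`). -/
def deleteEdge (X : FuzzyGraph V) (a b : V) : FuzzyGraph V where
  ρ := X.ρ
  υ x y := if (x = a ∧ y = b) ∨ (x = b ∧ y = a) then 0 else X.υ x y
  ρ_nonneg := X.ρ_nonneg
  ρ_le_one := X.ρ_le_one
  υ_nonneg := by
    intro x y; try dsimp only
    split_ifs
    · exact le_rfl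
    · exact X.υ_nonneg x y
  symm := by
    intro x y; try dsimp only
    by_cases h : (x = a ∧ y = b) ∨ (x = b ∧ y = a)
    · rw [if_pos h, if_pos (by tauto)]
    · rw [if_neg h, if_neg (by tauto), X.symm]
  υ_le := by
    intro x y; try dsimp only
    split_ifs
    · exact le_min (X.ρ_nonneg x) (X.ρ_nonneg y)
    · exact X.υ_le x y
  loopless := by
    intro x; try dsimp only
    split_ifs
    · rfl
    · exact X.loopless x

/-- `ab` is a strong edge (α- or β-strong). -/
def StrongEdge (X : FuzzyGraph V) (a b : V) : Prop :=
  0 < X.υ a b ∧ (X.deleteEdge a b).conn a b ≤ X.υ a b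

/-- `ab` is an α-strong edge. -/
def AlphaStrong (X : FuzzyGraph V) (a b : V) : Prop :=
  0 < X.υ a b ∧ (X.deleteEdge a b).conn a b < X.υ a b

/-- `ab` is a β-strong edge. -/
def BetaStrong (X : FuzzyGraph V) (a b : V) : Prop :=
  0 < X.υ a b ∧ X.υ a b = (X.deleteEdge a b).conn a b

/-- `ab` is a δ-edge. -/
def DeltaEdge (X : FuzzyGraph V) (a b : V) : Prop :=
  0 < X.υ a b ∧ X.υ a b < (X.deleteEdge a b).conn a b

/-- The minimum weight of a strong edge incident at `a`. -/
noncomputable def minInc (X : FuzzyGraph V) (a : V) : ℝ :=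
  sInf {w | ∃ b, X.StrongEdge a b ∧ w = X.υ a b}

/-- The weight of a set of vertices. -/
noncomputable def weight (X : FuzzyGraph V) (S : Finset V) : ℝ :=
  ∑ a ∈ S, X.minInc a

/-- `D` is a strong dominating set. -/
def IsSDS (X : FuzzyGraph V) (D : Finset V) : Prop :=
  ∀ v, v ∉ D → ∃ a ∈ D, X.StrongEdge a v

/-- `D` is a minimal strong dominating set. -/
def IsMinimalSDS (X : FuzzyGraph V) (D : Finset V) : Prop :=
  X.IsSDS D ∧ ∀ a ∈ D, ¬ X.IsSDS (D.erase a)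

/-- `D` is a minimum (least weight) strong dominating set. -/
def IsMinimumSDS (X : FuzzyGraph V) (D : Finset V) : Prop :=
  X.IsSDS D ∧ ∀ D' : Finset V, X.IsSDS D' → X.weight D ≤ X.weight D'

/-- The strong domination degree of a vertex. -/
noncomputable def sd (X : FuzzyGraph V) (u : V) : ℝ :=
  sInf {w | ∃ D : Finset V, X.IsMinimalSDS D ∧ u ∈ D ∧ w = X.weight D}

/-- The strong domination number. -/
noncomputable def gammaS (X : FuzzyGraph V) : ℝ :=
  sInf {w | ∃ D : Finset V, X.IsSDS D ∧ w = X.weight D}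

/-- The upper strong domination number. -/
noncomputable def GammaS (X : FuzzyGraph V) : ℝ :=
  sSup {w | ∃ D : Finset V, X.IsMinimalSDS D ∧ w = X.weight D}

/-- The strong domination index. -/
noncomputable def SDI (X : FuzzyGraph V) : ℝ := ∑ u : V, X.sd u

/-- `X` is connected. -/
def Connected (X : FuzzyGraph V) : Prop := ∀ a b : V, a ≠ b → ∃ l, X.IsPath a b l

/-- `X` is a strong fuzzy graph: every edge is strong. -/
def IsStrongFG (X : FuzzyGraph V) : Prop := ∀ a b, 0 < X.υ a b → X.StrongEdge a b

/-- Underlying (support) simple graph. -/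
def support (X : FuzzyGraph V) : SimpleGraph V where
  Adj a b := 0 < X.υ a b
  symm := ⟨by intro a b h; change 0 < X.υ a b at h; show 0 < X.υ b a; rw [X.symm]; exact h⟩
  loopless := ⟨by intro a h; change 0 < X.υ a a at h; rw [X.loopless] at h; exact lt_irrefl 0 h⟩

/-- `X` is a fuzzy tree. -/
def IsFuzzyTree (X : FuzzyGraph V) : Prop :=
  ∃ F : FuzzyGraph V, F.ρ = X.ρ ∧ (∀ a b, F.υ a b = X.υ a b ∨ F.υ a b = 0) ∧
    F.support.IsTree ∧ ∀ a b, 0 < X.υ a b → F.υ a b = 0 → X.υ a b < F.conn a b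

/-- The size of a fuzzy graph: the sum of all edge weights. -/
noncomputable def size (X : FuzzyGraph V) : ℝ := (∑ a : V, ∑ b : V, X.υ a b) / 2

/-- The underlying graph of `X` is a cycle. -/
def IsCycleGraph (X : FuzzyGraph V) : Prop :=
  ∃ n : ℕ, 3 ≤ n ∧ ∃ f : ZMod n ≃ V,
    ∀ x y : V, 0 < X.υ x y ↔ ∃ i : ZMod n, (x = f i ∧ y = f (i + 1)) ∨ (x = f (i + 1) ∧ y = f i)

/-- `X` is a fuzzy cycle: a cycle with at least two edges of minimum weight. -/
def IsFuzzyCycle (X : FuzzyGraph V) : Prop :=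
  X.IsCycleGraph ∧ ∃ a b c d : V, 0 < X.υ a b ∧ 0 < X.υ c d ∧
    Sym2.mk (a, b) ≠ Sym2.mk (c, d) ∧ X.υ a b = X.υ c d ∧
    ∀ x y, 0 < X.υ x y → X.υ a b ≤ X.υ x y

/-- A set of pairwise fuzzy independent vertices. -/
def IsFuzzyIndep (X : FuzzyGraph V) (S : Finset V) : Prop :=
  ∀ a ∈ S, ∀ b ∈ S, a ≠ b → ¬ X.StrongEdge a b

/-- The strong independent domination number. -/
noncomputable def iS (X : FuzzyGraph V) : ℝ :=
  sInf {w | ∃ D : Finset V, X.IsSDS D ∧ X.IsFuzzyIndep D ∧ w = X.weight D}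

/-- The strong independence number. -/
noncomputable def betaS (X : FuzzyGraph V) : ℝ :=
  sSup {w | ∃ S : Finset V, X.IsFuzzyIndep S ∧ w = X.weight S}

/-- Closed strong neighborhood. -/
def closedNbhd (X : FuzzyGraph V) (a : V) : Set V := insert a {b | X.StrongEdge a b}

/-- Open strong neighborhood. -/
def openNbhd (X : FuzzyGraph V) (a : V) : Set V := {b | X.StrongEdge a b}

/-- Private neighborhood of `a` with respect to `S`. -/
def privNbhd (X : FuzzyGraph V) (a : V) (S : Finset V) : Set V :=
  X.closedNbhd a \ ⋃ b ∈ S.erase a, X.closedNbhd b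

/-- `S` is a fuzzy irredundant set. -/
def IsIrredundant (X : FuzzyGraph V) (S : Finset V) : Prop :=
  ∀ a ∈ S, (X.privNbhd a S).Nonempty

/-- `S` is a maximal fuzzy irredundant set. -/
def IsMaximalIrredundant (X : FuzzyGraph V) (S : Finset V) : Prop :=
  X.IsIrredundant S ∧ ∀ v ∉ S, ¬ X.IsIrredundant (insert v S)

/-- The strong irredundance number. -/
noncomputable def irS (X : FuzzyGraph V) : ℝ :=
  sInf {w | ∃ S : Finset V, X.IsMaximalIrredundant S ∧ w = X.weight S}

end FuzzyGraph

namespace FuzzyGraph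

variable {V : Type*} [Fintype V] [DecidableEq V]

theorem aux_ext {X Y : FuzzyGraph V} (h1 : X.ρ = Y.ρ) (h2 : X.υ = Y.υ) : X = Y := by
  cases X; cases Y; cases h1; cases h2; rfl

theorem aux_deleteEdge_symm (X : FuzzyGraph V) (a b : V) :
    X.deleteEdge a b = X.deleteEdge b a := by
  refine aux_ext rfl ?_
  funext x y
  show (if (x = a ∧ y = b) ∨ (x = b ∧ y = a) then (0:ℝ) else X.υ x y) =
    (if (x = b ∧ y = a) ∨ (x = a ∧ y = b) then (0:ℝ) else X.υ x y)
  by_cases h : (x = a ∧ y = b) ∨ (x = b ∧ y = a)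
  · rw [if_pos h, if_pos (Or.symm h)]
  · rw [if_neg h, if_neg (fun h' => h (Or.symm h'))]

theorem aux_pathStrength_le_pair (Y : FuzzyGraph V) :
    ∀ (l : List V) (k : ℕ) (x y : V), l[k]? = some x → l[k+1]? = some y →
      Y.pathStrength l ≤ Y.υ x y
  | [], _, _, _, hx, _ => by simp at hx
  | [_], k, _, _, _, hy => by rcases k with _ | k <;> simp at hy
  | z :: w :: t, 0, x, y, hx, hy => by
    simp only [List.getElem?_cons_zero, List.getElem?_cons_succ, Option.some.injEq] at hx hy
    subst hx
    subst hy
    cases t with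
    | nil => exact le_of_eq rfl
    | cons c t => exact min_le_left _ _
  | z :: w :: t, (k+1), x, y, hx, hy => by
    simp only [List.getElem?_cons_succ] at hx hy
    have h := aux_pathStrength_le_pair Y (w :: t) k x y hx (by simpa using hy)
    refine le_trans ?_ h
    cases t with
    | nil => simp at hy
    | cons c t => exact min_le_right _ _

theorem aux_pathStrength_cons_cons (Y : FuzzyGraph V) (x y : V) {t : List V} (h : t ≠ []) :
    Y.pathStrength (x :: y :: t) = min (Y.υ x y) (Y.pathStrength (y :: t)) := by
  cases t with
  | nil => exact absurd rfl h
  | cons c t => rfl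

theorem aux_pathStrength_append_pair (Y : FuzzyGraph V) :
    ∀ (l : List V) (x a b : V),
      Y.pathStrength (x :: l ++ [a, b]) = min (Y.pathStrength (x :: l ++ [a])) (Y.υ a b)
  | [], x, a, b => rfl
  | c :: l, x, a, b => by
    have ih := aux_pathStrength_append_pair Y l c a b
    have h1 : (x :: (c :: l) ++ [a, b]) = x :: c :: (l ++ [a, b]) := by simp
    have h2 : (x :: (c :: l) ++ [a]) = x :: c :: (l ++ [a]) := by simp
    rw [h1, h2, aux_pathStrength_cons_cons Y x c (by simp),
      aux_pathStrength_cons_cons Y x c (by simp)]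
    have h3 : (c :: (l ++ [a, b])) = (c :: l ++ [a, b]) := by simp
    have h4 : (c :: (l ++ [a])) = (c :: l ++ [a]) := by simp
    rw [h3, h4, ih, min_assoc]

theorem aux_pathStrength_reverse (Y : FuzzyGraph V) :
    ∀ l : List V, Y.pathStrength l.reverse = Y.pathStrength l
  | [] => rfl
  | [_] => rfl
  | [x, y] => by
    show Y.pathStrength [y, x] = Y.pathStrength [x, y]
    show Y.υ y x = Y.υ x y
    exact Y.symm y x
  | x :: y :: z :: t => by
    have ih := aux_pathStrength_reverse Y (y :: z :: t)
    have h1 : (x :: y :: z :: t).reverse = (z :: t).reverse ++ [y, x] := by simp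
    rcases h : (z :: t).reverse with _ | ⟨h0, r⟩
    · exfalso; have := congrArg List.length h; simp at this
    · rw [h1, h]
      have h2 : (h0 :: r ++ [y, x]) = h0 :: r ++ [y, x] := rfl
      rw [show (h0 :: r ++ [y, x] : List V) = (h0 :: r ++ [y, x]) from rfl]
      rw [aux_pathStrength_append_pair Y r h0 y x]
      have h3 : (h0 :: r ++ [y]) = (y :: z :: t).reverse := by
        rw [show (y :: z :: t).reverse = (z :: t).reverse ++ [y] by simp, h]
      rw [h3, ih, Y.symm y x]
      rw [aux_pathStrength_cons_cons Y x y (by simp)]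
      exact min_comm _ _

theorem aux_isPath_reverse (Y : FuzzyGraph V) {a b : V} {l : List V} (h : Y.IsPath a b l) :
    Y.IsPath b a l.reverse := by
  obtain ⟨hn, hh, hl, hlen, hc⟩ := h
  refine ⟨List.nodup_reverse.mpr hn, ?_, ?_, by simpa using hlen, ?_⟩
  · rw [List.head?_reverse]; exact hl
  · rw [List.getLast?_reverse]; exact hh
  · unfold List.Chain' at hc ⊢
    rw [List.isChain_reverse]
    exact hc.imp (fun {x y} hxy => by show 0 < Y.υ y x; rw [Y.symm]; exact hxy)

theorem aux_conn_symm (Y : FuzzyGraph V) (a b : V) : Y.conn a b = Y.conn b a := by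
  unfold conn
  congr 1
  ext w
  constructor
  · rintro ⟨l, hl, rfl⟩
    exact ⟨l.reverse, aux_isPath_reverse Y hl, (aux_pathStrength_reverse Y l).symm⟩
  · rintro ⟨l, hl, rfl⟩
    exact ⟨l.reverse, aux_isPath_reverse Y hl, (aux_pathStrength_reverse Y l).symm⟩

theorem aux_chainDir {n : ℕ} :
    ∀ (m : List (ZMod n)), m.Nodup →
      m.Chain' (fun p q => q = p + 1 ∨ q = p - 1) →
      m.Chain' (fun p q => q = p + 1) ∨ m.Chain' (fun p q => q = p - 1)
  | [], _, _ => Or.inl List.isChain_nil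
  | [_], _, _ => Or.inl (List.isChain_singleton _)
  | x :: y :: t, hnd, hc => by
    obtain ⟨hstep, hc'⟩ := List.isChain_cons_cons.mp hc
    have hnd' : (y :: t).Nodup := (List.nodup_cons.mp hnd).2
    have hxmem : x ∉ y :: t := (List.nodup_cons.mp hnd).1
    have ih := aux_chainDir (y :: t) hnd' hc'
    cases t with
    | nil =>
      rcases hstep with h | h
      · exact Or.inl (List.isChain_cons_cons.mpr ⟨h, List.isChain_singleton _⟩)
      · exact Or.inr (List.isChain_cons_cons.mpr ⟨h, List.isChain_singleton _⟩)
    | cons z t =>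
      rcases hstep with h | h
      · left
        refine List.isChain_cons_cons.mpr ⟨h, ?_⟩
        rcases ih with h1 | h1
        · exact h1
        · exfalso
          have hz : z = y - 1 := (List.isChain_cons_cons.mp h1).1
          have hzx : z = x := by rw [hz, h]; ring
          exact hxmem (by rw [← hzx]; exact List.mem_cons_of_mem _ List.mem_cons_self)
      · right
        refine List.isChain_cons_cons.mpr ⟨h, ?_⟩
        rcases ih with h1 | h1
        · exfalso
          have hz : z = y + 1 := (List.isChain_cons_cons.mp h1).1
          have hzx : z = x := by rw [hz, h]; ring
          exact hxmem (by rw [← hzx]; exact List.mem_cons_of_mem _ List.mem_cons_self)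
        · exact h1

theorem aux_chainPos {n : ℕ} {δ : ZMod n} :
    ∀ (m : List (ZMod n)) (s : ZMod n), m.head? = some s →
      m.Chain' (fun p q => q = p + δ) → ∀ k, k < m.length → m[k]? = some (s + (k : ZMod n) * δ)
  | [], _, hh, _, _, _ => by simp at hh
  | x :: t, s, hh, hc, k, hk => by
    have hx : x = s := by simpa using hh
    cases k with
    | zero => simp [hx]
    | succ k =>
      cases t with
      | nil => simp at hk
      | cons u t =>
        have hu : u = x + δ := (List.isChain_cons_cons.mp hc).1
        have ih := aux_chainPos (u :: t) u rfl (List.isChain_cons_cons.mp hc).2 k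
          (by simpa using hk)
        simp only [List.getElem?_cons_succ]
        rw [ih]
        congr 1
        rw [hu, hx]
        push_cast
        ring

theorem aux_key (X : FuzzyGraph V) (hC : X.IsCycleGraph)
    {a b c d : V} (hab : 0 < X.υ a b) (hcd : 0 < X.υ c d)
    (hne : s(a, b) ≠ s(c, d)) {l : List V}
    (hl : (X.deleteEdge a b).IsPath a b l) :
    ∃ (k : ℕ) (x y : V), l[k]? = some x ∧ l[k+1]? = some y ∧
      ((x = c ∧ y = d) ∨ (x = d ∧ y = c)) := by
  obtain ⟨n, hn3, f, hf⟩ := hC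
  haveI : NeZero n := ⟨by omega⟩
  obtain ⟨hnd, hh, hlast, hlen, hc⟩ := hl
  have hYv : ∀ x y, (X.deleteEdge a b).υ x y =
      if (x = a ∧ y = b) ∨ (x = b ∧ y = a) then 0 else X.υ x y := fun _ _ => rfl
  have hYpos : ∀ x y : V, 0 < (X.deleteEdge a b).υ x y →
      ¬((x = a ∧ y = b) ∨ (x = b ∧ y = a)) ∧ 0 < X.υ x y := by
    intro x y h
    rw [hYv] at h
    by_cases hcond : (x = a ∧ y = b) ∨ (x = b ∧ y = a)
    · rw [if_pos hcond] at h; exact absurd h (lt_irrefl 0)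
    · rw [if_neg hcond] at h; exact ⟨hcond, h⟩
  set m : List (ZMod n) := l.map f.symm with hm
  have hchain : m.Chain' (fun p q => q = p + 1 ∨ q = p - 1) := by
    unfold List.Chain' at hc ⊢
    rw [hm, List.isChain_map]
    refine hc.imp ?_
    intro x y hxy
    obtain ⟨-, hpos⟩ := hYpos x y hxy
    obtain ⟨i, hi⟩ := (hf x y).mp hpos
    rcases hi with ⟨hx, hy⟩ | ⟨hx, hy⟩
    · left; rw [hx, hy]; simp
    · right; rw [hx, hy]; simp
  have hndm : m.Nodup := hnd.map f.symm.injective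
  have hLl : m.length = l.length := by rw [hm]; exact List.length_map _
  have hLn : m.length ≤ n := by
    have := hndm.length_le_card
    rwa [ZMod.card] at this
  have hL2 : 2 ≤ m.length := by omega
  set s : ZMod n := f.symm a with hs
  set e : ZMod n := f.symm b with he
  have hfa : f s = a := f.apply_symm_apply a
  have hfb : f e = b := f.apply_symm_apply b
  have hhm : m.head? = some s := by rw [hm, List.head?_map, hh]; rfl
  have hlm : m.getLast? = some e := by rw [hm, List.getLast?_map, hlast]; rfl
  have hse : e = s + 1 ∨ e = s - 1 := by
    obtain ⟨i, hi⟩ := (hf a b).mp hab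
    rcases hi with ⟨ha', hb'⟩ | ⟨ha', hb'⟩
    · left; rw [hs, he, ha', hb']; simp
    · right; rw [hs, he, ha', hb']; simp
  -- length-2 contradiction
  have hL2ne : m.length ≠ 2 := by
    intro h2
    have hl2 : l.length = 2 := by omega
    rcases l with _ | ⟨x, _ | ⟨y, _ | ⟨z, t⟩⟩⟩ <;> simp at hl2
    have hxa : x = a := by simpa using hh
    have hyb : y = b := by simpa using hlast
    have hpos : 0 < (X.deleteEdge a b).υ x y := by
      have := List.isChain_cons_cons.mp hc
      exact this.1
    exact (hYpos x y hpos).1 (Or.inl ⟨hxa, hyb⟩)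
  -- last element via positions
  have hget_last : m[m.length - 1]? = some e := by
    rw [← List.getLast?_eq_getElem?]; exact hlm
  -- edge cd indices
  obtain ⟨j, hj⟩ := (hf c d).mp hcd
  -- translate an index fact about m into one about l
  have mtol : ∀ (k : ℕ) (p : ZMod n), m[k]? = some p → l[k]? = some (f p) := by
    intro k p hp
    rw [hm, List.getElem?_map] at hp
    rcases hq : l[k]? with _ | x
    · rw [hq] at hp; simp at hp
    · rw [hq] at hp
      simp only [Option.map_some, Option.some.injEq] at hp
      rw [← hp, f.apply_symm_apply]
  rcases aux_chainDir m hndm hchain with hdir | hdir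
  · -- ascending: m[k] = s + k
    have hposn : ∀ k, k < m.length → m[k]? = some (s + (k : ZMod n)) := by
      intro k hk
      have := aux_chainPos (δ := 1) m s hhm hdir k hk
      rwa [mul_one] at this
    have hlaste : e = s + ((m.length - 1 : ℕ) : ZMod n) := by
      have := hposn (m.length - 1) (by omega)
      rw [hget_last] at this
      exact Option.some.inj this
    rcases hse with h1 | h1
    · -- e = s + 1 : forces length 2, contradiction
      exfalso
      have h' : s + ((m.length - 1 : ℕ) : ZMod n) = s + 1 := hlaste.symm.trans h1
      have h3 : ((m.length - 1 : ℕ) : ZMod n) = ((1 : ℕ) : ZMod n) := by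
        rw [Nat.cast_one]; exact add_left_cancel h'
      have hv1 : m.length - 1 = 1 := by
        have hva := ZMod.val_cast_of_lt (by omega : m.length - 1 < n)
        have hvb := ZMod.val_cast_of_lt (by omega : 1 < n)
        rw [h3, hvb] at hva
        omega
      exact hL2ne (by omega)
    · -- e = s - 1 : length = n
      have h' : s + ((m.length - 1 : ℕ) : ZMod n) = s - 1 := hlaste.symm.trans h1
      have hneg : ((n - 1 : ℕ) : ZMod n) = -1 := by
        push_cast [Nat.cast_sub (by omega : 1 ≤ n)]
        simp
      have hcast : ((m.length - 1 : ℕ) : ZMod n) = ((n - 1 : ℕ) : ZMod n) := by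
        rw [hneg]; linear_combination h'
      have hLeq : m.length = n := by
        have hva := ZMod.val_cast_of_lt (by omega : m.length - 1 < n)
        have hvb := ZMod.val_cast_of_lt (by omega : n - 1 < n)
        rw [hcast, hvb] at hva
        omega
      have hjne : j ≠ e := by
        intro hje
        apply hne
        have hj1 : j + 1 = s := by rw [hje, h1]; ring
        have hfj : f j = b := by rw [hje, hfb]
        have hfj1 : f (j + 1) = a := by rw [hj1, hfa]
        rcases hj with ⟨hc', hd'⟩ | ⟨hc', hd'⟩
        · rw [hc', hd', hfj, hfj1]; exact Sym2.eq_swap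
        · rw [hc', hd', hfj, hfj1]
      set k : ℕ := (j - s).val with hk
      have hkval : ((k : ℕ) : ZMod n) = j - s := ZMod.natCast_zmod_val _
      have hkn : k < n := ZMod.val_lt _
      have hkne : k ≠ n - 1 := by
        intro hkeq
        apply hjne
        have h4 : j - s = -1 := by rw [← hkval, hkeq, hneg]
        rw [h1]; linear_combination h4
      have hk1 : k + 1 < m.length := by omega
      have hmk : m[k]? = some j := by
        rw [hposn k (by omega)]
        congr 1; linear_combination hkval
      have hmk1 : m[k+1]? = some (j + 1) := by
        rw [hposn (k+1) hk1]
        congr 1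
        push_cast
        linear_combination hkval
      refine ⟨k, f j, f (j+1), mtol k j hmk, mtol (k+1) (j+1) hmk1, ?_⟩
      rcases hj with ⟨hc', hd'⟩ | ⟨hc', hd'⟩
      · exact Or.inl ⟨hc'.symm, hd'.symm⟩
      · exact Or.inr ⟨hd'.symm, hc'.symm⟩
  · -- descending: m[k] = s - k
    have hdir' : m.Chain' (fun p q => q = p + (-1)) := by
      refine hdir.imp ?_
      intro p q hpq
      rw [hpq]; ring
    have hposn : ∀ k, k < m.length → m[k]? = some (s - (k : ZMod n)) := by
      intro k hk
      have := aux_chainPos (δ := -1) m s hhm hdir' k hk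
      rw [this]
      congr 1; ring
    have hlaste : e = s - ((m.length - 1 : ℕ) : ZMod n) := by
      have := hposn (m.length - 1) (by omega)
      rw [hget_last] at this
      exact Option.some.inj this
    rcases hse with h1 | h1
    · -- e = s + 1 : length = n
      have h' : s - ((m.length - 1 : ℕ) : ZMod n) = s + 1 := hlaste.symm.trans h1
      have hneg : ((n - 1 : ℕ) : ZMod n) = -1 := by
        push_cast [Nat.cast_sub (by omega : 1 ≤ n)]
        simp
      have hcast : ((m.length - 1 : ℕ) : ZMod n) = ((n - 1 : ℕ) : ZMod n) := by
        rw [hneg]; linear_combination -h'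
      have hLeq : m.length = n := by
        have hva := ZMod.val_cast_of_lt (by omega : m.length - 1 < n)
        have hvb := ZMod.val_cast_of_lt (by omega : n - 1 < n)
        rw [hcast, hvb] at hva
        omega
      have hjne : j ≠ s := by
        intro hje
        apply hne
        have hfj : f j = a := by rw [hje, hfa]
        have hfj1 : f (j + 1) = b := by rw [hje, ← h1, hfb]
        rcases hj with ⟨hc', hd'⟩ | ⟨hc', hd'⟩
        · rw [hc', hd', hfj, hfj1]
        · rw [hc', hd', hfj, hfj1]; exact Sym2.eq_swap
      set k : ℕ := (s - j - 1).val with hk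
      have hkval : ((k : ℕ) : ZMod n) = s - j - 1 := ZMod.natCast_zmod_val _
      have hkn : k < n := ZMod.val_lt _
      have hkne : k ≠ n - 1 := by
        intro hkeq
        apply hjne
        have h4 : s - j - 1 = -1 := by rw [← hkval, hkeq, hneg]
        linear_combination -h4
      have hk1 : k + 1 < m.length := by omega
      have hmk : m[k]? = some (j + 1) := by
        rw [hposn k (by omega)]
        congr 1; linear_combination -hkval
      have hmk1 : m[k+1]? = some j := by
        rw [hposn (k+1) hk1]
        congr 1
        push_cast
        linear_combination -hkval
      refine ⟨k, f (j+1), f j, mtol k (j+1) hmk, mtol (k+1) j hmk1, ?_⟩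
      rcases hj with ⟨hc', hd'⟩ | ⟨hc', hd'⟩
      · exact Or.inr ⟨hd'.symm, hc'.symm⟩
      · exact Or.inl ⟨hc'.symm, hd'.symm⟩
    · -- e = s - 1 : forces length 2, contradiction
      exfalso
      have h' : s - ((m.length - 1 : ℕ) : ZMod n) = s - 1 := hlaste.symm.trans h1
      have h3 : ((m.length - 1 : ℕ) : ZMod n) = ((1 : ℕ) : ZMod n) := by
        rw [Nat.cast_one]; linear_combination -h'
      have hv1 : m.length - 1 = 1 := by
        have hva := ZMod.val_cast_of_lt (by omega : m.length - 1 < n)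
        have hvb := ZMod.val_cast_of_lt (by omega : 1 < n)
        rw [h3, hvb] at hva
        omega
      exact hL2ne (by omega)

end FuzzyGraph

/-- In a fuzzy cycle, the weight of a β-strong edge is at most the
weight of any α-strong edge. -/
theorem FuzzyGraph.betaStrong_le_alphaStrong {V : Type*} [Fintype V] [DecidableEq V]
    (X : FuzzyGraph V) (hX : X.IsFuzzyCycle) {a b c d : V}
    (hab : X.BetaStrong a b) (hcd : X.AlphaStrong c d) :
    X.υ a b ≤ X.υ c d := by
  obtain ⟨hC, -⟩ := hX
  obtain ⟨habpos, habeq⟩ := hab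
  obtain ⟨hcdpos, hcdlt⟩ := hcd
  have hne : s(a, b) ≠ s(c, d) := by
    intro h
    rcases Sym2.eq_iff.mp h with ⟨h1, h2⟩ | ⟨h1, h2⟩
    · subst h1; subst h2; linarith
    · subst h1; subst h2
      rw [X.aux_deleteEdge_symm b a, aux_conn_symm, X.symm b a] at hcdlt
      linarith
  rw [habeq]
  refine Real.sSup_le ?_ (X.υ_nonneg c d)
  rintro w ⟨l, hl, rfl⟩
  obtain ⟨k, x, y, hx, hy, hxy⟩ := X.aux_key hC habpos hcdpos hne hl
  have h1 : (X.deleteEdge a b).pathStrength l ≤ (X.deleteEdge a b).υ x y :=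
    FuzzyGraph.aux_pathStrength_le_pair _ l k x y hx hy
  have h2 : (X.deleteEdge a b).υ x y ≤ X.υ x y := by
    show (if (x = a ∧ y = b) ∨ (x = b ∧ y = a) then (0:ℝ) else X.υ x y) ≤ X.υ x y
    split_ifs
    · exact X.υ_nonneg x y
    · exact le_rfl
  rcases hxy with ⟨hxc, hyd⟩ | ⟨hxd, hyc⟩
  · rw [hxc, hyd] at h1 h2
    exact h1.trans h2
  · rw [hxd, hyc] at h1 h2
    rw [X.symm d c] at h2
    exact h1.trans h2
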